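/- Let p, u, v, w, q, z be real numbers. Define F : ℝ³ → Matrix 3 3 ℝ by F(y) = [[p, (u + v·y₁)·e^{−y₁}, v·e^{−y₁}], [(w + z·y₁)·e^{−y₁}, q·e^{−2y₁}, 0], [z·e^{−y₁}, 0, 0]], let B(y) = (F(y) − F(y)ᵀ)/2 be its antisymmetric part, and define the torsion H_{ijk}(y) = ∂_{y_i}B_{jk}(y) + ∂_{y_j}B_{ki}(y) + ∂_{y_k}B_{ij}(y). Then H_{ijk}(y) = 0 for all indices i,j,k ∈ {1,2,3} and all y ∈ ℝ³, i.e. the sigma model on the Manin triple (4|1) is torsionless. -/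

import Mathlib

open Real Matrix

/-- The torsion potential of a sigma model tensor `F`: its antisymmetric part. -/
noncomputable def Bpot (F : (Fin 3 → ℝ) → Matrix (Fin 3) (Fin 3) ℝ)
    (y : Fin 3 → ℝ) : Matrix (Fin 3) (Fin 3) ℝ :=
  (1 / 2 : ℝ) • (F y - (F y)ᵀ)

/-- The torsion `H_{ijk} = ∂ᵢ B_{jk} + ∂ⱼ B_{ki} + ∂ₖ B_{ij}` of a sigma model
tensor `F`, where `∂ᵢ` is the partial derivative in the `i`-th coordinate. -/
noncomputable def torsionH (F : (Fin 3 → ℝ) → Matrix (Fin 3) (Fin 3) ℝ)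
    (y : Fin 3 → ℝ) (i j k : Fin 3) : ℝ :=
  deriv (fun t => Bpot F (Function.update y i t) j k) (y i) +
  deriv (fun t => Bpot F (Function.update y j t) k i) (y j) +
  deriv (fun t => Bpot F (Function.update y k t) i j) (y k)

/-- The tensor `F` of the sigma model on the Manin triple `(4|1)`. -/
noncomputable def F41 (p u v w q z : ℝ) (y : Fin 3 → ℝ) : Matrix (Fin 3) (Fin 3) ℝ :=
  !![p,                             (u + v * y 0) * exp (-(y 0)), v * exp (-(y 0));
     (w + z * y 0) * exp (-(y 0)),  q * exp (-(2 * y 0)),         0;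
     z * exp (-(y 0)),              0,                            0]

lemma hconst (p u v w q z : ℝ) (y : Fin 3 → ℝ) (i : Fin 3) (hi : i ≠ 0) (a b : Fin 3) :
    deriv (fun t => Bpot (F41 p u v w q z) (Function.update y i t) a b) (y i) = 0 := by
  have h : ∀ t, F41 p u v w q z (Function.update y i t) = F41 p u v w q z y := by
    intro t
    simp [F41, Function.update_of_ne (Ne.symm hi)]
  simp only [Bpot, h]
  exact deriv_const _ _

lemma hconst1 (p u v w q z : ℝ) (y : Fin 3 → ℝ) (a b : Fin 3) :
    deriv (fun t => Bpot (F41 p u v w q z) (Function.update y 1 t) a b) (y 1) = 0 :=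
  hconst p u v w q z y 1 (by decide) a b

lemma hconst2 (p u v w q z : ℝ) (y : Fin 3 → ℝ) (a b : Fin 3) :
    deriv (fun t => Bpot (F41 p u v w q z) (Function.update y 2 t) a b) (y 2) = 0 :=
  hconst p u v w q z y 2 (by decide) a b

lemma hdiag (F : (Fin 3 → ℝ) → Matrix (Fin 3) (Fin 3) ℝ) (y : Fin 3 → ℝ) (i a : Fin 3) :
    deriv (fun t => Bpot F (Function.update y i t) a a) (y i) = 0 := by
  have : (fun t => Bpot F (Function.update y i t) a a) = fun _ => 0 := by
    funext t; simp [Bpot, Matrix.transpose_apply]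
  rw [this]; exact deriv_const _ _

lemma hanti (F : (Fin 3 → ℝ) → Matrix (Fin 3) (Fin 3) ℝ) (y : Fin 3 → ℝ) (i a b : Fin 3) :
    deriv (fun t => Bpot F (Function.update y i t) b a) (y i)
      = - deriv (fun t => Bpot F (Function.update y i t) a b) (y i) := by
  have h : (fun t => Bpot F (Function.update y i t) b a)
      = fun t => -(Bpot F (Function.update y i t) a b) := by
    funext t; simp [Bpot, Matrix.transpose_apply]; ring
  rw [h, deriv.fun_neg]

lemma hB12 (p u v w q z : ℝ) (y : Fin 3 → ℝ) (i : Fin 3) :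
    deriv (fun t => Bpot (F41 p u v w q z) (Function.update y i t) 1 2) (y i) = 0 := by
  have : (fun t => Bpot (F41 p u v w q z) (Function.update y i t) 1 2) = fun _ => 0 := by
    funext t
    simp [Bpot, F41, Matrix.transpose_apply, Matrix.vecHead, Matrix.vecTail]
  rw [this]; exact deriv_const _ _

lemma hB21 (p u v w q z : ℝ) (y : Fin 3 → ℝ) (i : Fin 3) :
    deriv (fun t => Bpot (F41 p u v w q z) (Function.update y i t) 2 1) (y i) = 0 := by
  have : (fun t => Bpot (F41 p u v w q z) (Function.update y i t) 2 1) = fun _ => 0 := by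
    funext t
    simp [Bpot, F41, Matrix.transpose_apply, Matrix.vecHead, Matrix.vecTail]
  rw [this]; exact deriv_const _ _


/-- The sigma model on the Manin triple `(4|1)` is torsionless. -/
theorem torsion41_eq_zero (p u v w q z : ℝ) :
    ∀ (y : Fin 3 → ℝ) (i j k : Fin 3), torsionH (F41 p u v w q z) y i j k = 0 := by
  intro y i j k
  unfold torsionH
  fin_cases i <;> fin_cases j <;> fin_cases k <;>
    simp only [Fin.isValue, Fin.mk_one, show (⟨2, by norm_num⟩ : Fin 3) = 2 from rfl,
      show (⟨0, by norm_num⟩ : Fin 3) = 0 from rfl] <;>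
    (repeat' first
      | rw [hdiag]
      | rw [hB12 p u v w q z]
      | rw [hB21 p u v w q z]
      | rw [hconst1 p u v w q z]
      | rw [hconst2 p u v w q z]) <;>
    (try rw [hanti]) <;>
    ring
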